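/- Let p be a real polynomial of degree k ≥ 2, q its associated symmetric polynomial, N(x,y) = y·q(x,y) − p(y), D(x,y) = q(x,y), and let α ≠ β be two simple real roots of p. At the focal point Q = (α, β): N_x(Q) = β·p'(α)/(α − β), N_y(Q) = −α·p'(β)/(α − β), D_x(Q) = p'(α)/(α − β), D_y(Q) = −p'(β)/(α − β), and consequently N_x(Q)·D_y(Q) − N_y(Q)·D_x(Q) = p'(α)·p'(β)/(α − β) ≠ 0. -/

import Mathlib

open Polynomial Filter Topology

/-- The symmetric polynomial `q(x,y) = Σ_{j=1}^k a_j Σ_{i=0}^{j-1} x^i y^{j-1-i}`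
associated to a real polynomial `p(x) = Σ_{j=0}^k a_j x^j`;
it satisfies `p(x) - p(y) = (x - y) * secQ p x y`. -/
noncomputable def secQ (p : Polynomial ℝ) (x y : ℝ) : ℝ :=
  ∑ j ∈ Finset.range (p.natDegree + 1),
    p.coeff j * ∑ i ∈ Finset.range j, x ^ i * y ^ (j - 1 - i)

/-- Numerator of the second component of the secant map: `N(x,y) = y*q(x,y) - p(y)`. -/
noncomputable def secN (p : Polynomial ℝ) (x y : ℝ) : ℝ :=
  y * secQ p x y - Polynomial.eval y p

/-- Denominator of the second component of the secant map: `D(x,y) = q(x,y)`. -/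
noncomputable def secD (p : Polynomial ℝ) (x y : ℝ) : ℝ := secQ p x y

lemma secQ_mul (p : Polynomial ℝ) (x y : ℝ) :
    secQ p x y * (x - y) = p.eval x - p.eval y := by
  unfold secQ
  rw [Finset.sum_mul, p.eval_eq_sum_range, p.eval_eq_sum_range, ← Finset.sum_sub_distrib]
  refine Finset.sum_congr rfl fun j _ => ?_
  rw [mul_assoc, geom_sum₂_mul, mul_sub]

lemma secQ_diff_left (p : Polynomial ℝ) (y : ℝ) :
    Differentiable ℝ (fun x => secQ p x y) := by
  unfold secQ
  apply Differentiable.fun_sum; intro j _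
  apply Differentiable.const_mul
  apply Differentiable.fun_sum; intro i _
  exact (differentiable_pow i).mul_const _

lemma secQ_diff_right (p : Polynomial ℝ) (x : ℝ) :
    Differentiable ℝ (fun y => secQ p x y) := by
  unfold secQ
  apply Differentiable.fun_sum; intro j _
  apply Differentiable.const_mul
  apply Differentiable.fun_sum; intro i _
  exact (differentiable_pow _).const_mul _

theorem secant_focal_partials (p : Polynomial ℝ) (hp : 2 ≤ p.natDegree) (α β : ℝ)
    (hαβ : α ≠ β) (hα : p.eval α = 0) (hβ : p.eval β = 0)
    (hα' : p.derivative.eval α ≠ 0) (hβ' : p.derivative.eval β ≠ 0) :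
    deriv (fun t => secN p t β) α = β * p.derivative.eval α / (α - β) ∧
    deriv (fun t => secN p α t) β = -α * p.derivative.eval β / (α - β) ∧
    deriv (fun t => secD p t β) α = p.derivative.eval α / (α - β) ∧
    deriv (fun t => secD p α t) β = -(p.derivative.eval β / (α - β)) ∧
    deriv (fun t => secN p t β) α * deriv (fun t => secD p α t) β -
        deriv (fun t => secN p α t) β * deriv (fun t => secD p t β) α =
      p.derivative.eval α * p.derivative.eval β / (α - β) ∧
    p.derivative.eval α * p.derivative.eval β / (α - β) ≠ 0 := by
  have hne : α - β ≠ 0 := sub_ne_zero.2 hαβ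
  have hQ0 : secQ p α β = 0 := by
    have h := secQ_mul p α β
    rw [hα, hβ, sub_zero] at h
    exact (mul_eq_zero.1 h).resolve_right hne
  -- derivative in first variable
  set d := deriv (fun t => secQ p t β) α with hd
  have hf : HasDerivAt (fun t => secQ p t β) d α :=
    ((secQ_diff_left p β) α).hasDerivAt
  have h1 : HasDerivAt (fun t => secQ p t β * (t - β)) (d * (α - β) + secQ p α β * 1) α :=
    hf.mul ((hasDerivAt_id α).sub_const β)
  have h1' : HasDerivAt (fun t => secQ p t β * (t - β)) (p.derivative.eval α) α := by
    have : (fun t => secQ p t β * (t - β)) = fun t => p.eval t - p.eval β := by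
      funext t; exact secQ_mul p t β
    rw [this]
    simpa using (p.hasDerivAt α).sub_const (p.eval β)
  have hdval : d = p.derivative.eval α / (α - β) := by
    have := h1.unique h1'
    rw [hQ0] at this
    field_simp at this ⊢
    linarith [this]
  -- derivative in second variable
  set e := deriv (fun t => secQ p α t) β with he
  have hg : HasDerivAt (fun t => secQ p α t) e β :=
    ((secQ_diff_right p α) β).hasDerivAt
  have h2 : HasDerivAt (fun t => secQ p α t * (α - t)) (e * (α - β) + secQ p α β * (0 - 1)) β :=
    hg.mul ((hasDerivAt_const β α).sub (hasDerivAt_id β))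
  have h2' : HasDerivAt (fun t => secQ p α t * (α - t)) (-(p.derivative.eval β)) β := by
    have : (fun t => secQ p α t * (α - t)) = fun t => p.eval α - p.eval t := by
      funext t; exact secQ_mul p α t
    rw [this]
    exact (p.hasDerivAt β).const_sub (p.eval α)
  have heval : e = -(p.derivative.eval β / (α - β)) := by
    have := h2.unique h2'
    rw [hQ0] at this
    norm_num at this
    field_simp at this ⊢
    linarith [this]
  -- secN partials
  have hNx : deriv (fun t => secN p t β) α = β * d := by
    have : HasDerivAt (fun t => secN p t β) (β * d) α := by
      unfold secN
      simpa using ((hf.const_mul β).sub_const (p.eval β))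
    exact this.deriv
  have hNy : deriv (fun t => secN p α t) β = (1 * secQ p α β + β * e) - p.derivative.eval β := by
    have : HasDerivAt (fun t => secN p α t)
        ((1 * secQ p α β + β * e) - p.derivative.eval β) β := by
      unfold secN
      exact ((hasDerivAt_id β).mul hg).sub (p.hasDerivAt β)
    exact this.deriv
  have hDx : deriv (fun t => secD p t β) α = d := by rw [hd]; rfl
  have hDy : deriv (fun t => secD p α t) β = e := by rw [he]; rfl
  rw [hNx, hNy, hDx, hDy, hdval, heval, hQ0]
  refine ⟨by ring, by field_simp; ring, rfl, rfl, by field_simp; ring, ?_⟩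
  exact div_ne_zero (mul_ne_zero hα' hβ') hne
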